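/- Let n ≥ 3. Then the number of subgroups of order 2^k in the group C4 × C2 × C2^{n-3} equals [n-3 choose k]_2 + 3·2^{n-k-2}·[n-3 choose k-1]_2 + 2^{n-k}(2^{n-k-2}+1)·[n-3 choose k-2]_2 + 2^{2n-2k}·[n-3 choose k-3]_2, where [m choose j]_2 denotes the number of subgroups of order 2^j in an elementary abelian 2-group of order 2^m (the Gaussian binomial coefficient). -/

import Mathlib

/-- `C2` : the cyclic group of order 2. -/
abbrev C2 := Multiplicative (ZMod 2)

/-- `C4` : the cyclic group of order 4. -/
abbrev C4 := Multiplicative (ZMod 4)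

/-- The number of subgroups of order `2^k` of `G`. -/
noncomputable def s (k : ℕ) (G : Type*) [Group G] : ℕ :=
  Nat.card {H : Subgroup G // Nat.card H = 2 ^ k}

/-- The Gaussian binomial coefficient `[m choose j]₂`: the number of `j`-dimensional
subspaces of `𝔽₂^m`, taken to be `0` when `j < 0` (or, automatically, when `j > m`). -/
noncomputable def gb (m : ℕ) (j : ℤ) : ℕ :=
  if 0 ≤ j then
    Nat.card {W : Submodule (ZMod 2) (Fin m → ZMod 2) //
      Module.finrank (ZMod 2) W = j.toNat}
  else 0

open Module

section Counting

noncomputable def gcount (V : Type*) [AddCommGroup V] [Module (ZMod 2) V] (j : ℕ) : ℕ :=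
  Nat.card {W : Submodule (ZMod 2) V // Module.finrank (ZMod 2) W = j}

noncomputable def gcZ (V : Type*) [AddCommGroup V] [Module (ZMod 2) V] (j : ℤ) : ℕ :=
  if 0 ≤ j then gcount V j.toNat else 0

instance finiteSubmodule (R M : Type*) [Semiring R] [AddCommMonoid M] [Module R M] [Finite M] :
    Finite (Submodule R M) :=
  Finite.of_injective (fun S => (S : Set M)) SetLike.coe_injective

instance finiteAddSubgroup (M : Type*) [AddGroup M] [Finite M] :
    Finite (AddSubgroup M) :=
  Finite.of_injective (fun S => (S : Set M)) SetLike.coe_injective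

variable {M : Type*} [AddCommGroup M] [Module (ZMod 2) M]

lemma card_f2 (M : Type*) [AddCommGroup M] [Module (ZMod 2) M] [Finite M] :
    Nat.card M = 2 ^ finrank (ZMod 2) M := by
  haveI : Fact (Nat.Prime 2) := ⟨by norm_num⟩
  haveI : Fintype M := Fintype.ofFinite M
  rw [Nat.card_eq_fintype_card, card_eq_pow_finrank (K := ZMod 2), ZMod.card]

lemma count_addsubgroup_eq_gcount (M : Type*) [AddCommGroup M] [Module (ZMod 2) M] [Finite M]
    (k : ℕ) :
    Nat.card {K : AddSubgroup M // Nat.card K = 2 ^ k} = gcount M k := by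
  apply Nat.card_congr
  refine Equiv.subtypeEquiv (AddSubgroup.toZModSubmodule 2).toEquiv (fun K => ?_)
  have hc : Nat.card K = Nat.card (AddSubgroup.toZModSubmodule 2 K) :=
    Nat.card_congr (Equiv.subtypeEquivRight fun x =>
      (AddSubgroup.mem_toZModSubmodule 2).symm)
  rw [hc, card_f2 (AddSubgroup.toZModSubmodule 2 K)]
  constructor
  · intro h; exact Nat.pow_right_injective (by norm_num) h
  · intro h; exact congrArg (2 ^ ·) h

lemma gcount_eq_zero (M : Type*) [AddCommGroup M] [Module (ZMod 2) M] [Finite M] {j : ℕ}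
    (h : finrank (ZMod 2) M < j) : gcount M j = 0 := by
  have : IsEmpty {W : Submodule (ZMod 2) M // finrank (ZMod 2) W = j} := by
    refine ⟨fun W => absurd (W.2 ▸ W.1.finrank_le) (by omega)⟩
  exact Nat.card_of_isEmpty

lemma gcount_zero_le (M : Type*) [AddCommGroup M] [Module (ZMod 2) M] [Finite M] {j : ℕ} :
    True := trivial

lemma nat_card_subtype_split {α : Type*} [Finite α] (Q P : α → Prop) :
    Nat.card {x // Q x} =
      Nat.card {x // Q x ∧ P x} + Nat.card {x // Q x ∧ ¬ P x} := by
  classical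
  calc Nat.card {x // Q x}
      = Nat.card ({y : {x // Q x} // P y.1} ⊕ {y : {x // Q x} // ¬ P y.1}) :=
        Nat.card_congr (Equiv.sumCompl fun y : {x // Q x} => P y.1).symm
    _ = Nat.card {y : {x // Q x} // P y.1} + Nat.card {y : {x // Q x} // ¬ P y.1} :=
        Nat.card_sum
    _ = _ := by
        rw [Nat.card_congr (Equiv.subtypeSubtypeEquivSubtypeInter Q P),
          Nat.card_congr (Equiv.subtypeSubtypeEquivSubtypeInter Q (fun x => ¬ P x))]

lemma card_le_range {A B : Type*} [AddCommGroup A] [AddCommGroup B] (ι : A →+ B)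
    (hι : Function.Injective ι) (c : ℕ) :
    Nat.card {H : AddSubgroup B // Nat.card H = c ∧ H ≤ ι.range} =
      Nat.card {K : AddSubgroup A // Nat.card K = c} := by
  have hmapcard : ∀ K : AddSubgroup A, Nat.card (K.map ι) = Nat.card K := fun K =>
    Nat.card_congr (AddSubgroup.equivMapOfInjective K ι hι).toEquiv.symm
  refine Nat.card_congr ⟨fun H => ⟨(H.1.comap ι), ?_⟩, fun K => ⟨K.1.map ι, ?_, ?_⟩, ?_, ?_⟩
  · have hm : (H.1.comap ι).map ι = H.1 := AddSubgroup.map_comap_eq_self H.2.2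
    calc Nat.card (H.1.comap ι) = Nat.card ((H.1.comap ι).map ι) := (hmapcard _).symm
      _ = c := by rw [hm]; exact H.2.1
  · rw [hmapcard, K.2]
  · exact AddSubgroup.map_le_range ι K.1
  · intro H
    exact Subtype.ext (AddSubgroup.map_comap_eq_self H.2.2)
  · intro K
    exact Subtype.ext (AddSubgroup.comap_map_eq_self_of_injective hι K.1)

lemma nat_card_sigma_const {ι : Type*} [Finite ι] {f : ι → Type*} [∀ i, Finite (f i)] {c : ℕ}
    (h : ∀ i, Nat.card (f i) = c) : Nat.card (Σ i, f i) = Nat.card ι * c := by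
  cases nonempty_fintype ι
  haveI : ∀ i, Fintype (f i) := fun i => Fintype.ofFinite _
  rw [Nat.card_eq_fintype_card, Nat.card_eq_fintype_card, Fintype.card_sigma]
  rw [Finset.sum_congr rfl (fun i _ => (Nat.card_eq_fintype_card (α := f i)).symm.trans (h i))]
  simp [Finset.sum_const, Finset.card_univ]

end Counting

set_option linter.unusedSectionVars false

section Master

variable (q : ℕ) [NeZero q] (hq : (2 : ℕ) ∣ q)
variable {V : Type*} [AddCommGroup V] [Module (ZMod 2) V] [Finite V]

noncomputable def psiH (U : Submodule (ZMod 2) V) (x : V ⧸ U) : ZMod q × V →+ V ⧸ U where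
  toFun p := U.mkQ p.2 - (ZMod.castHom hq (ZMod 2) p.1) • x
  map_zero' := by simp
  map_add' p p' := by
    simp only [Prod.snd_add, map_add, Prod.fst_add, add_smul]
    abel

noncomputable def PhiH (U : Submodule (ZMod 2) V) (x : V ⧸ U) : AddSubgroup (ZMod q × V) :=
  (psiH q hq U x).ker

lemma mem_PhiH {U : Submodule (ZMod 2) V} {x : V ⧸ U} {p : ZMod q × V} :
    p ∈ PhiH q hq U x ↔ U.mkQ p.2 = (ZMod.castHom hq (ZMod 2) p.1) • x := by
  simp [PhiH, psiH, AddMonoidHom.mem_ker, sub_eq_zero]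

lemma psiH_surj (U : Submodule (ZMod 2) V) (x : V ⧸ U) :
    Function.Surjective (psiH q hq U x) := by
  intro y
  obtain ⟨w, rfl⟩ := U.mkQ_surjective y
  exact ⟨(0, w), by simp [psiH]⟩

lemma card_PhiH (U : Submodule (ZMod 2) V) (x : V ⧸ U) :
    Nat.card (PhiH q hq U x) = q * 2 ^ finrank (ZMod 2) U := by
  have h1 : Nat.card (ZMod q × V) =
      Nat.card ((ZMod q × V) ⧸ PhiH q hq U x) * Nat.card (PhiH q hq U x) :=
    AddSubgroup.card_eq_card_quotient_mul_card_addSubgroup _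
  have h2 : Nat.card ((ZMod q × V) ⧸ PhiH q hq U x) = Nat.card (V ⧸ U) :=
    Nat.card_congr (QuotientAddGroup.quotientKerEquivOfSurjective _ (psiH_surj q hq U x)).toEquiv
  have h3 : Nat.card (ZMod q × V) = q * 2 ^ finrank (ZMod 2) V := by
    rw [Nat.card_prod, Nat.card_zmod, card_f2]
  haveI : Finite (V ⧸ U) := Quotient.finite _
  have h4 : Nat.card (V ⧸ U) = 2 ^ finrank (ZMod 2) (V ⧸ U) := card_f2 _
  have h5 : finrank (ZMod 2) (V ⧸ U) + finrank (ZMod 2) U = finrank (ZMod 2) V :=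
    Submodule.finrank_quotient_add_finrank U
  have hpos : 0 < 2 ^ finrank (ZMod 2) (V ⧸ U) := Nat.pow_pos (by norm_num)
  rw [h2, h3, h4] at h1
  apply Nat.eq_of_mul_eq_mul_left hpos
  rw [← h1, ← h5, pow_add]
  ring

lemma PhiH_inj :
    Function.Injective
      (fun p : Σ U : Submodule (ZMod 2) V, V ⧸ U => PhiH q hq p.1 p.2) := by
  rintro ⟨U, x⟩ ⟨U', x'⟩ h
  simp only at h
  have hU : U = U' := by
    ext w
    have h0 : ((0, w) ∈ PhiH q hq U x) ↔ ((0, w) ∈ PhiH q hq U' x') := by rw [h]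
    simpa [mem_PhiH, Submodule.Quotient.mk_eq_zero] using h0
  subst hU
  obtain ⟨w, hw⟩ := U.mkQ_surjective x
  have h1 : (1, w) ∈ PhiH q hq U x := by
    rw [mem_PhiH]
    show U.mkQ w = (ZMod.castHom hq (ZMod 2)) (1 : ZMod q) • x
    rw [map_one, one_smul, hw]
  rw [h, mem_PhiH] at h1
  have hone : (ZMod.castHom hq (ZMod 2)) ((1, w) : ZMod q × V).1 • x' = x' := by
    show (ZMod.castHom hq (ZMod 2)) (1 : ZMod q) • x' = x'
    rw [map_one, one_smul]
  rw [hone] at h1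
  have : x = x' := by rw [← hw, h1]
  rw [this]

lemma nsmul_one_w (n : ℕ) (w₀ : V) : n • ((1 : ZMod q), w₀) = ((n : ZMod q), n • w₀) := by
  ext
  · simp [nsmul_eq_mul]
  · rfl

lemma PhiH_surj_onto (H : AddSubgroup (ZMod q × V)) (w₀ : V) (h₀ : (1, w₀) ∈ H) :
    ∃ (U : Submodule (ZMod 2) V) (x : V ⧸ U), PhiH q hq U x = H := by
  classical
  set U₀ : AddSubgroup V := H.comap (AddMonoidHom.inr (ZMod q) V) with hU₀
  set U : Submodule (ZMod 2) V := AddSubgroup.toZModSubmodule 2 U₀ with hU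
  have hUmem : ∀ w : V, w ∈ U ↔ (0, w) ∈ H := fun w => Iff.rfl
  refine ⟨U, U.mkQ w₀, ?_⟩
  have key : ∀ (b : ZMod q) (v : V),
      (b, v) = (0, v - b.val • w₀) + b.val • (1, w₀) := by
    intro b v
    rw [nsmul_one_w]
    ext
    · simp [ZMod.natCast_rightInverse b]
    · simp
  have hcast : ∀ b : ZMod q,
      (ZMod.castHom hq (ZMod 2) b) • (U.mkQ w₀) = b.val • (U.mkQ w₀) := by
    intro b
    rw [ZMod.castHom_apply, ← ZMod.natCast_val, Nat.cast_smul_eq_nsmul]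
  ext ⟨a, w⟩
  rw [mem_PhiH, hcast]
  constructor
  · intro hmk
    have hmem0 : U.mkQ (w - a.val • w₀) = 0 := by
      rw [map_sub, map_nsmul, hmk, sub_self]
    have h2 : (0, w - a.val • w₀) ∈ H :=
      (hUmem _).1 ((Submodule.Quotient.mk_eq_zero U).1 (by simpa using hmem0))
    rw [key a w]
    exact H.add_mem h2 (H.nsmul_mem h₀ a.val)
  · intro hmem
    have h2 : (0, w - a.val • w₀) ∈ H := by
      have hsub := H.sub_mem hmem (H.nsmul_mem h₀ a.val)
      have heq : ((0, w - a.val • w₀) : ZMod q × V) = (a, w) - a.val • (1, w₀) :=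
        eq_sub_iff_add_eq.2 (key a w).symm
      rwa [← heq] at hsub
    have : w - a.val • w₀ ∈ U := (hUmem _).2 h2
    have hmem0 : U.mkQ (w - a.val • w₀) = 0 := by
      simpa using (Submodule.Quotient.mk_eq_zero U).2 this
    rw [map_sub, map_nsmul, sub_eq_zero] at hmem0
    exact hmem0

end Master

section Master2

variable (q : ℕ) [NeZero q]
variable {V : Type*} [AddCommGroup V] [Module (ZMod 2) V] [Finite V]

lemma countP (hq : (2 : ℕ) ∣ q) (e k : ℕ) (hqe : q = 2 ^ e) :
    Nat.card {H : AddSubgroup (ZMod q × V) // Nat.card H = 2 ^ k ∧ ∃ w, (1, w) ∈ H} =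
      if e ≤ k then gcount V (k - e) * 2 ^ (finrank (ZMod 2) V - (k - e)) else 0 := by
  classical
  -- step 1: the subtype is equivalent to pairs (U, x) with card condition
  have E1 : {p : Σ U : Submodule (ZMod 2) V, V ⧸ U // Nat.card (PhiH q hq p.1 p.2) = 2 ^ k} ≃
      {H : AddSubgroup (ZMod q × V) // Nat.card H = 2 ^ k ∧ ∃ w, (1, w) ∈ H} := by
    refine Equiv.ofBijective (fun p => ⟨PhiH q hq p.1.1 p.1.2, p.2, ?_⟩) ⟨?_, ?_⟩
    · obtain ⟨w, hw⟩ := p.1.1.mkQ_surjective p.1.2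
      refine ⟨w, ?_⟩
      rw [mem_PhiH]
      show p.1.1.mkQ w = (ZMod.castHom hq (ZMod 2)) (1 : ZMod q) • p.1.2
      rw [map_one, one_smul, hw]
    · intro p p' hpp
      have := PhiH_inj q hq (Subtype.ext_iff.1 hpp)
      exact Subtype.ext this
    · rintro ⟨H, hc, w, hw⟩
      obtain ⟨U, x, hUx⟩ := PhiH_surj_onto q hq H w hw
      exact ⟨⟨⟨U, x⟩, by rw [hUx, hc]⟩, Subtype.ext hUx⟩
  rw [← Nat.card_congr E1]
  -- step 2: rewrite the card condition
  have hcond : ∀ p : Σ U : Submodule (ZMod 2) V, V ⧸ U,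
      (Nat.card (PhiH q hq p.1 p.2) = 2 ^ k) ↔ (e ≤ k ∧ finrank (ZMod 2) p.1 = k - e) := by
    intro p
    rw [card_PhiH, hqe, ← pow_add]
    constructor
    · intro h
      have := Nat.pow_right_injective (le_refl 2) h
      omega
    · intro ⟨h1, h2⟩
      rw [h2]
      congr 1
      omega
  by_cases hek : e ≤ k
  · rw [if_pos hek]
    have E2 : {p : Σ U : Submodule (ZMod 2) V, V ⧸ U //
        Nat.card (PhiH q hq p.1 p.2) = 2 ^ k} ≃
        Σ U : {U : Submodule (ZMod 2) V // finrank (ZMod 2) U = k - e}, V ⧸ U.1 := by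
      refine (Equiv.subtypeEquivRight fun p => ?_).trans
        (Equiv.subtypeSigmaEquiv (fun U : Submodule (ZMod 2) V => V ⧸ U)
          (fun U => finrank (ZMod 2) U = k - e))
      rw [hcond p, and_iff_right hek]
    rw [Nat.card_congr E2]
    haveI : ∀ U : {U : Submodule (ZMod 2) V // finrank (ZMod 2) U = k - e},
        Finite (V ⧸ U.1) := fun U => Quotient.finite _
    refine nat_card_sigma_const (fun U => ?_)
    -- card of quotient
    rw [card_f2 (V ⧸ U.1)]
    congr 1
    have h5 : finrank (ZMod 2) (V ⧸ U.1) + finrank (ZMod 2) U.1 = finrank (ZMod 2) V :=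
      Submodule.finrank_quotient_add_finrank U.1
    have h6 : finrank (ZMod 2) U.1 = k - e := U.2
    have h7 : finrank (ZMod 2) U.1 ≤ finrank (ZMod 2) V := U.1.finrank_le
    omega
  · rw [if_neg hek]
    have : IsEmpty {p : Σ U : Submodule (ZMod 2) V, V ⧸ U //
        Nat.card (PhiH q hq p.1 p.2) = 2 ^ k} := by
      refine ⟨fun p => ?_⟩
      have := (hcond p.1).1 p.2
      exact hek this.1
    exact Nat.card_of_isEmpty

lemma noP_iff (hq : (2 : ℕ) ∣ q) (hu : ∀ a : ZMod q, ZMod.castHom hq (ZMod 2) a = 1 → ∃ c : ZMod q, c * a = 1)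
    {A' : Type*} [AddCommGroup A'] (ι : A' →+ ZMod q × V)
    (hrange : ∀ p : ZMod q × V, p ∈ ι.range ↔ ZMod.castHom hq (ZMod 2) p.1 = 0)
    (H : AddSubgroup (ZMod q × V)) :
    (¬ ∃ w, (1, w) ∈ H) ↔ H ≤ ι.range := by
  constructor
  · intro hno p hp
    rw [hrange]
    by_contra hne
    have h1 : ZMod.castHom hq (ZMod 2) p.1 = 1 := by
      have : ∀ a : ZMod 2, a = 0 ∨ a = 1 := by decide
      rcases this (ZMod.castHom hq (ZMod 2) p.1) with h | h
      · exact absurd h hne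
      · exact h
    obtain ⟨c, hc⟩ := hu _ h1
    apply hno
    refine ⟨c.val • p.2, ?_⟩
    have hp1 : c.val • p = (1, c.val • p.2) := by
      have : c.val • p = (c.val • p.1, c.val • p.2) := rfl
      rw [this]
      congr 1
      rw [nsmul_eq_mul, ZMod.natCast_rightInverse c, hc]
    exact hp1 ▸ H.nsmul_mem hp c.val
  · rintro hle ⟨w, hw⟩
    have h0 := (hrange _).1 (hle hw)
    simp only [map_one] at h0
    exact one_ne_zero h0

lemma masterCount (hq : (2 : ℕ) ∣ q) (e k : ℕ) (hqe : q = 2 ^ e)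
    (hu : ∀ a : ZMod q, ZMod.castHom hq (ZMod 2) a = 1 → ∃ c : ZMod q, c * a = 1)
    {A' : Type*} [AddCommGroup A'] (ι : A' →+ ZMod q × V) (hι : Function.Injective ι)
    (hrange : ∀ p : ZMod q × V, p ∈ ι.range ↔ ZMod.castHom hq (ZMod 2) p.1 = 0) :
    Nat.card {H : AddSubgroup (ZMod q × V) // Nat.card H = 2 ^ k} =
      Nat.card {K : AddSubgroup A' // Nat.card K = 2 ^ k} +
        (if e ≤ k then gcount V (k - e) * 2 ^ (finrank (ZMod 2) V - (k - e)) else 0) := by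
  classical
  rw [nat_card_subtype_split (fun H : AddSubgroup (ZMod q × V) => Nat.card H = 2 ^ k)
    (fun H => ∃ w, (1, w) ∈ H), countP q hq e k hqe]
  rw [Nat.card_congr (Equiv.subtypeEquivRight
    (fun H : AddSubgroup (ZMod q × V) => and_congr_right
      (fun _ => noP_iff q hq hu ι hrange H)))]
  rw [card_le_range ι hι]
  ring

end Master2

section Instances

def iota1 : ZMod 2 →+ ZMod 4 where
  toFun x := (2 * x.val : ℕ)
  map_zero' := by decide
  map_add' := by decide

lemma iota1_inj : Function.Injective iota1 := by decide

variable (V : Type*) [AddCommGroup V] [Module (ZMod 2) V] [Finite V]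

lemma pascal_nat (k : ℕ) :
    gcount (ZMod 2 × V) k =
      gcount V k +
        (if 1 ≤ k then gcount V (k - 1) * 2 ^ (finrank (ZMod 2) V - (k - 1)) else 0) := by
  rw [← count_addsubgroup_eq_gcount (ZMod 2 × V) k, ← count_addsubgroup_eq_gcount V k]
  refine masterCount 2 dvd_rfl 1 k rfl (by decide) (AddMonoidHom.inr (ZMod 2) V)
    (fun a b h => congrArg Prod.snd h) (fun p => ?_)
  constructor
  · rintro ⟨w, rfl⟩
    show ZMod.castHom dvd_rfl (ZMod 2) 0 = 0
    simp
  · intro h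
    have hz : ∀ a : ZMod 2, ZMod.castHom dvd_rfl (ZMod 2) a = 0 → a = 0 := by decide
    refine ⟨p.2, ?_⟩
    have : p.1 = 0 := hz _ h
    show ((0 : ZMod 2), p.2) = p
    rw [← this]

lemma count4 (k : ℕ) :
    Nat.card {H : AddSubgroup (ZMod 4 × V) // Nat.card H = 2 ^ k} =
      gcount (ZMod 2 × V) k +
        (if 2 ≤ k then gcount V (k - 2) * 2 ^ (finrank (ZMod 2) V - (k - 2)) else 0) := by
  rw [← count_addsubgroup_eq_gcount (ZMod 2 × V) k]
  refine masterCount 4 (by norm_num) 2 k (by norm_num) (by decide)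
    (iota1.prodMap (AddMonoidHom.id V)) ?_ (fun p => ?_)
  · intro p p' h
    have h' : (iota1 p.1, p.2) = (iota1 p'.1, p'.2) := h
    exact Prod.ext (iota1_inj (congrArg (Prod.fst : ZMod 4 × V → ZMod 4) h'))
      (congrArg (Prod.snd : ZMod 4 × V → V) h')
  · constructor
    · rintro ⟨⟨a, w⟩, rfl⟩
      show ZMod.castHom (by norm_num) (ZMod 2) (iota1 a) = 0
      revert a; decide
    · intro h
      have hsur : ∀ b : ZMod 4, ZMod.castHom (by norm_num : (2:ℕ) ∣ 4) (ZMod 2) b = 0 →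
          ∃ a : ZMod 2, iota1 a = b := by decide
      obtain ⟨a, ha⟩ := hsur p.1 h
      exact ⟨(a, p.2), Prod.ext ha rfl⟩

end Instances

section QLayer

variable (V : Type*) [AddCommGroup V] [Module (ZMod 2) V] [Finite V]

lemma gcZ_coe (k : ℕ) : gcZ V (k : ℤ) = gcount V k := by simp [gcZ]

lemma gcZ_neg {j : ℤ} (hj : j < 0) : gcZ V j = 0 := if_neg (not_le.2 hj)

lemma pascalQ (j : ℤ) :
    (gcZ (ZMod 2 × V) j : ℚ) =
      gcZ V j + (2:ℚ) ^ ((finrank (ZMod 2) V : ℤ) + 1 - j) * gcZ V (j - 1) := by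
  rcases le_or_gt 0 j with hj | hj
  · obtain ⟨k, rfl⟩ : ∃ k : ℕ, j = k := ⟨j.toNat, (Int.toNat_of_nonneg hj).symm⟩
    rcases Nat.eq_zero_or_pos k with rfl | hk
    · have hp := pascal_nat V 0
      rw [if_neg (by omega : ¬ 1 ≤ 0), add_zero] at hp
      rw [gcZ_coe, gcZ_coe, hp, gcZ_neg V (by norm_num : ((0:ℕ):ℤ) - 1 < 0)]
      push_cast
      ring
    · have h1 : ((k:ℤ) - 1) = ((k - 1 : ℕ) : ℤ) := by omega
      rw [h1, gcZ_coe, gcZ_coe, gcZ_coe, pascal_nat V k, if_pos (show 1 ≤ k by omega)]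
      rcases le_or_gt (k - 1) (finrank (ZMod 2) V) with hkd | hkd
      · have h2 : ((2:ℚ) ^ ((finrank (ZMod 2) V) - (k-1) : ℕ)) =
            2 ^ ((finrank (ZMod 2) V : ℤ) + 1 - k) := by
          rw [← zpow_natCast]
          congr 1
          omega
        push_cast
        rw [h2]
        ring
      · have hz : gcount V (k-1) = 0 := gcount_eq_zero V hkd
        rw [hz]
        push_cast
        ring
  · rw [gcZ_neg _ hj, gcZ_neg _ hj, gcZ_neg _ (by omega : j - 1 < 0)]
    push_cast
    ring

lemma count4Q (k : ℕ) (hk : k ≤ finrank (ZMod 2) V + 2) :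
    (Nat.card {H : AddSubgroup (ZMod 4 × V) // Nat.card H = 2 ^ k} : ℚ) =
      gcZ (ZMod 2 × V) k +
        (2:ℚ) ^ ((finrank (ZMod 2) V : ℤ) + 2 - k) * gcZ V ((k:ℤ) - 2) := by
  rw [count4 V k, gcZ_coe]
  rcases le_or_gt 2 k with h2 | h2
  · rw [if_pos h2]
    have h1 : ((k:ℤ) - 2) = ((k - 2 : ℕ) : ℤ) := by omega
    rw [h1, gcZ_coe]
    have h3 : ((2:ℚ) ^ ((finrank (ZMod 2) V) - (k-2) : ℕ)) =
        2 ^ ((finrank (ZMod 2) V : ℤ) + 2 - k) := by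
      rw [← zpow_natCast]
      congr 1
      omega
    push_cast
    rw [h3]
    ring
  · rw [if_neg (by omega), gcZ_neg V (by omega : (k:ℤ) - 2 < 0)]
    push_cast
    ring

end QLayer

section Plumbing

lemma card_subgroup_mulEquiv {G G' : Type*} [Group G] [Group G'] (e : G ≃* G') (c : ℕ) :
    Nat.card {H : Subgroup G // Nat.card H = c} =
      Nat.card {H : Subgroup G' // Nat.card H = c} := by
  have hmc : ∀ K : Subgroup G, Nat.card (K.map e.toMonoidHom) = Nat.card K := fun K =>
    Nat.card_congr (K.equivMapOfInjective e.toMonoidHom e.injective).toEquiv.symm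
  have hmc' : ∀ K : Subgroup G', Nat.card (K.map e.symm.toMonoidHom) = Nat.card K := fun K =>
    Nat.card_congr (K.equivMapOfInjective e.symm.toMonoidHom e.symm.injective).toEquiv.symm
  have hcomp : ∀ K : Subgroup G, (K.map e.toMonoidHom).map e.symm.toMonoidHom = K := by
    intro K
    rw [Subgroup.map_map]
    have : (e.symm.toMonoidHom.comp e.toMonoidHom) = MonoidHom.id G := by
      ext x; exact e.symm_apply_apply x
    rw [this, Subgroup.map_id]
  have hcomp' : ∀ K : Subgroup G', (K.map e.symm.toMonoidHom).map e.toMonoidHom = K := by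
    intro K
    rw [Subgroup.map_map]
    have : (e.toMonoidHom.comp e.symm.toMonoidHom) = MonoidHom.id G' := by
      ext x; exact e.apply_symm_apply x
    rw [this, Subgroup.map_id]
  refine Nat.card_congr ⟨fun H => ⟨H.1.map e.toMonoidHom, by rw [hmc, H.2]⟩,
    fun H => ⟨H.1.map e.symm.toMonoidHom, by rw [hmc', H.2]⟩, ?_, ?_⟩
  · intro H; exact Subtype.ext (hcomp H.1)
  · intro H; exact Subtype.ext (hcomp' H.1)

lemma card_subgroup_multiplicative (A : Type*) [AddGroup A] (c : ℕ) :
    Nat.card {H : Subgroup (Multiplicative A) // Nat.card H = c} =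
      Nat.card {H : AddSubgroup A // Nat.card H = c} := by
  refine Nat.card_congr (Equiv.subtypeEquiv (AddSubgroup.toSubgroup (A := A)).toEquiv.symm ?_)
  intro H
  have : Nat.card H = Nat.card (AddSubgroup.toSubgroup.symm H) :=
    Nat.card_congr (Equiv.subtypeEquiv Multiplicative.ofAdd (fun a => Iff.rfl)).symm
  rw [this]
  rfl

end Plumbing

lemma gb_gcZ (m : ℕ) (j : ℤ) : gb m j = gcZ (Fin m → ZMod 2) j := rfl

noncomputable def bigEquiv (m : ℕ) :
    Multiplicative (ZMod 4 × (ZMod 2 × (Fin m → ZMod 2))) ≃* (C4 × C2 × (Fin m → C2)) :=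
  (MulEquiv.prodMultiplicative (G := ZMod 4) (H := ZMod 2 × (Fin m → ZMod 2))).trans
    (MulEquiv.prodCongr (MulEquiv.refl C4)
      ((MulEquiv.prodMultiplicative (G := ZMod 2) (H := Fin m → ZMod 2)).trans
        (MulEquiv.prodCongr (MulEquiv.refl C2) (MulEquiv.funMultiplicative (Fin m) (ZMod 2)))))

theorem s_k_of_C4_times_C2_pow (n k : ℕ) (hn : 3 ≤ n) (hk : k ≤ n) :
    (s k (C4 × C2 × (Fin (n - 3) → C2)) : ℚ) =
      gb (n - 3) k
        + 3 * 2 ^ ((n : ℤ) - k - 2) * gb (n - 3) ((k : ℤ) - 1)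
        + 2 ^ ((n : ℤ) - k) * (2 ^ ((n : ℤ) - k - 2) + 1) * gb (n - 3) ((k : ℤ) - 2)
        + 2 ^ (2 * (n : ℤ) - 2 * k) * gb (n - 3) ((k : ℤ) - 3) := by
  obtain ⟨m, rfl⟩ : ∃ m, n = m + 3 := ⟨n - 3, by omega⟩
  simp only [Nat.add_sub_cancel]
  show (s k (C4 × C2 × (Fin m → C2)) : ℚ) = _
  have hL : s k (C4 × C2 × (Fin m → C2)) =
      Nat.card {H : AddSubgroup (ZMod 4 × (ZMod 2 × (Fin m → ZMod 2))) //
        Nat.card H = 2 ^ k} := by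
    rw [s, card_subgroup_mulEquiv (bigEquiv m).symm, card_subgroup_multiplicative]
  have hd0 : finrank (ZMod 2) (Fin m → ZMod 2) = m := Module.finrank_fin_fun (ZMod 2)
  have hdV : finrank (ZMod 2) (ZMod 2 × (Fin m → ZMod 2)) = m + 1 := by
    rw [Module.finrank_prod, finrank_self, hd0]
    omega
  rw [hL, count4Q _ k (by omega), hdV,
    pascalQ (ZMod 2 × (Fin m → ZMod 2)) (k : ℤ), hdV,
    pascalQ (Fin m → ZMod 2) (k : ℤ),
    pascalQ (Fin m → ZMod 2) ((k : ℤ) - 1),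
    pascalQ (Fin m → ZMod 2) ((k : ℤ) - 2), hd0,
    ← gb_gcZ, ← gb_gcZ, ← gb_gcZ, ← gb_gcZ, ← gb_gcZ,
    show ((k:ℤ) - 1 - 1) = (k:ℤ) - 2 by ring,
    show ((k:ℤ) - 2 - 1) = (k:ℤ) - 3 by ring]
  have h2 : (2:ℚ) ≠ 0 := two_ne_zero
  push_cast
  set t : ℚ := (2:ℚ) ^ ((m:ℤ) + 1 - k) with ht
  have e_add : ∀ c : ℤ, (2:ℚ) ^ ((m:ℤ) + 1 - k + c) = t * 2 ^ c := fun c => by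
    rw [ht, ← zpow_add₀ h2]
  rw [show ((m:ℤ) + 1 + 1 - k) = ((m:ℤ) + 1 - k) + 1 by ring, e_add,
    show ((m:ℤ) + 1 + 2 - k) = ((m:ℤ) + 1 - k) + 2 by ring, e_add,
    show ((m:ℤ) + 1 - ((k:ℤ) - 1)) = ((m:ℤ) + 1 - k) + 1 by ring, e_add,
    show ((m:ℤ) + 1 - ((k:ℤ) - 2)) = ((m:ℤ) + 1 - k) + 2 by ring, e_add,
    show ((m:ℤ) + 3 - k - 2) = ((m:ℤ) + 1 - k) by ring,
    show ((m:ℤ) + 3 - k) = ((m:ℤ) + 1 - k) + 2 by ring, e_add,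
    show (2 * ((m:ℤ) + 3) - 2 * k) = ((m:ℤ) + 1 - k) + (((m:ℤ) + 1 - k) + 4) by ring,
    zpow_add₀ h2, e_add]
  rw [← ht]
  norm_num
  ring
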